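/- Say that a hereditary class X admits a universal bipartite permutation graph of linear order if there is a constant C such that for every n ≥ 1 there is a bipartite permutation graph with at most C·n vertices that contains every graph of X on at most n vertices as an induced subgraph. Then the class of all star forests does not admit a universal bipartite permutation graph of linear order, but every proper hereditary subclass of the class of star forests does; that is, the class of star forests is a minimal hereditary class not admitting a universal bipartite permutation graph of linear order. -/

import Mathlib

open SimpleGraph

/-- A class of finite graphs, given by a set of graphs on `Fin n` for each `n`. -/
abbrev GClass : Type := ∀ n : ℕ, Set (SimpleGraph (Fin n))

/-- A class is hereditary if it is closed under isomorphism and induced subgraphs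
(i.e. closed under graph embeddings). -/
def Hereditary (X : GClass) : Prop :=
  ∀ (n m : ℕ) (G : SimpleGraph (Fin n)) (H : SimpleGraph (Fin m)),
    G ∈ X n → Nonempty (H ↪g G) → H ∈ X m

/-- A bipartite permutation graph is a letter graph with the path decoder
over some finite alphabet. -/
def IsBPG {V : Type*} [Fintype V] (G : SimpleGraph V) : Prop :=
  ∃ (k : ℕ) (v : Fin (Fintype.card V) ≃ V) (w : Fin (Fintype.card V) → Fin k),
    ∀ i j : Fin (Fintype.card V), i < j →
      (G.Adj (v i) (v j) ↔ (w j : ℕ) = (w i : ℕ) + 1)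

/-- The star `K_{1,p}`, with center `0`. -/
def starGraph (p : ℕ) : SimpleGraph (Fin (p + 1)) :=
  SimpleGraph.fromRel (fun i _ => i = 0)

/-- A star forest: every connected component is a star `K_{1,p}` for some `p ≥ 0`. -/
def IsStarForest {V : Type*} (G : SimpleGraph V) : Prop :=
  ∀ c : G.ConnectedComponent, ∃ p, Nonempty (G.induce c.supp ≃g _root_.starGraph p)

/-- The class of all star forests. -/
def StarForestClass : GClass := fun _ => {G | IsStarForest G}

/-- `X` admits a universal bipartite permutation graph of linear order:
for some constant `C`, for every `n ≥ 1` there is a bipartite permutation graph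
with at most `C·n` vertices containing every graph of `X` on at most `n`
vertices as an induced subgraph. -/
def LinearUniversal (X : GClass) : Prop :=
  ∃ C : ℕ, ∀ n : ℕ, 1 ≤ n → ∃ (N : ℕ) (H : SimpleGraph (Fin N)),
    N ≤ C * n ∧ IsBPG H ∧
      ∀ m ≤ n, ∀ G : SimpleGraph (Fin m), G ∈ X m → Nonempty (G ↪g H)

/-! ### Letter graphs -/

def letterGraph (N : ℕ) (W : ℕ → ℕ) : SimpleGraph (Fin N) where
  Adj i j := (i < j ∧ W j = W i + 1) ∨ (j < i ∧ W i = W j + 1)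
  symm := ⟨by intro i j h; tauto⟩
  loopless := ⟨by intro i h; rcases h with ⟨h, _⟩ | ⟨h, _⟩ <;> exact lt_irrefl _ h⟩

lemma letterGraph_adj {N W} {i j : Fin N} :
    (letterGraph N W).Adj i j ↔ (i < j ∧ W j = W i + 1) ∨ (j < i ∧ W i = W j + 1) := Iff.rfl

lemma isBPG_letterGraph (N : ℕ) (W : ℕ → ℕ) : IsBPG (letterGraph N W) := by
  classical
  refine ⟨(Finset.range N).sup W + 1, finCongr (Fintype.card_fin N),
    fun i => ⟨W (finCongr (Fintype.card_fin N) i), ?_⟩, ?_⟩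
  · have : ((finCongr (Fintype.card_fin N) i : Fin N) : ℕ) < N := (finCongr _ i).2
    exact Nat.lt_succ_of_le (Finset.le_sup (Finset.mem_range.2 this))
  · intro i j hij
    have hvv : (finCongr (Fintype.card_fin N) i) < (finCongr (Fintype.card_fin N) j) := hij
    constructor
    · intro h
      rcases h with ⟨_, h⟩ | ⟨h, _⟩
      · exact h
      · exact absurd hvv (asymm h)
    · intro h; exact Or.inl ⟨hvv, h⟩
/-! ### Block graphs: `A` blocks of size `B` followed by `C` blocks of size `D`. -/

def bN (A B C D : ℕ) : ℕ := A * B + C * D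

def bsz (A B C D : ℕ) (s : ℕ) : ℕ := if s < A then B else D

def bpos (A B C D : ℕ) (s o : ℕ) : ℕ := if s < A then s * B + o else A * B + (s - A) * D + o

def bblk (A B C D : ℕ) (i : ℕ) : ℕ := if i < A * B then i / B else A + (i - A * B) / D

def boff (A B C D : ℕ) (i : ℕ) : ℕ := if i < A * B then i % B else (i - A * B) % D

def bW (A B C D : ℕ) (i : ℕ) : ℕ :=
  3 * bblk A B C D i + (if boff A B C D i = 0 then 0 else 1)

def blockGraph (A B C D : ℕ) : SimpleGraph (Fin (bN A B C D)) :=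
  letterGraph (bN A B C D) (bW A B C D)

variable {A B C D : ℕ}

lemma bpos_lt (hs : s < A + C) (ho : o < bsz A B C D s) : bpos A B C D s o < bN A B C D := by
  unfold bpos bN
  by_cases h : s < A
  · simp only [if_pos h]
    have hB : o < B := by simpa [bsz, if_pos h] using ho
    have : s * B + o < (s + 1) * B := by nlinarith
    have h2 : (s + 1) * B ≤ A * B := Nat.mul_le_mul_right _ h
    omega
  · simp only [if_neg h]
    have hD : o < D := by simpa [bsz, if_neg h] using ho
    have : (s - A) * D + o < (s - A + 1) * D := by nlinarith
    have h2 : (s - A + 1) * D ≤ C * D := Nat.mul_le_mul_right _ (by omega)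
    omega

lemma bblk_bpos (hs : s < A + C) (ho : o < bsz A B C D s) :
    bblk A B C D (bpos A B C D s o) = s ∧ boff A B C D (bpos A B C D s o) = o := by
  unfold bblk boff bpos
  by_cases h : s < A
  · have hB : o < B := by simpa [bsz, if_pos h] using ho
    have hlt : s * B + o < A * B := by
      have : s * B + o < (s + 1) * B := by nlinarith
      have h2 : (s + 1) * B ≤ A * B := Nat.mul_le_mul_right _ h
      omega
    simp only [if_pos h, if_pos hlt]
    rw [Nat.mul_comm s B]
    constructor
    · rw [Nat.mul_add_div (by omega), Nat.div_eq_of_lt hB]; omega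
    · rw [Nat.mul_add_mod, Nat.mod_eq_of_lt hB]
  · have hD : o < D := by simpa [bsz, if_neg h] using ho
    have hnlt : ¬ (A * B + (s - A) * D + o < A * B) := by omega
    simp only [if_neg h, if_neg hnlt]
    have he : A * B + (s - A) * D + o - A * B = (s - A) * D + o := by omega
    rw [he, Nat.mul_comm (s - A) D]
    constructor
    · rw [Nat.mul_add_div (by omega), Nat.div_eq_of_lt hD]; omega
    · rw [Nat.mul_add_mod, Nat.mod_eq_of_lt hD]

lemma bdecomp (hi : i < bN A B C D) :
    bblk A B C D i < A + C ∧ boff A B C D i < bsz A B C D (bblk A B C D i) ∧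
      bpos A B C D (bblk A B C D i) (boff A B C D i) = i := by
  unfold bN at hi
  unfold bblk boff bpos
  by_cases h : i < A * B
  · have hB : 0 < B := Nat.pos_of_ne_zero (by rintro rfl; simp at h)
    have hdiv : i / B < A := Nat.div_lt_of_lt_mul (by rwa [Nat.mul_comm B A])
    simp only [if_pos h, if_pos hdiv, bsz]
    refine ⟨by omega, Nat.mod_lt _ hB, ?_⟩
    rw [Nat.mul_comm (i / B) B]
    have := Nat.div_add_mod i B
    omega
  · have hD : 0 < D := Nat.pos_of_ne_zero (by rintro rfl; simp at hi; omega)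
    have hj : i - A * B < C * D := by omega
    have hdiv : (i - A * B) / D < C := Nat.div_lt_of_lt_mul (by rwa [Nat.mul_comm D C])
    have hnlt : ¬ (A + (i - A * B) / D < A) := Nat.not_lt.2 (Nat.le_add_right A _)
    simp only [if_neg h, if_neg hnlt, bsz]
    refine ⟨by omega, Nat.mod_lt _ hD, ?_⟩
    have he : A + (i - A * B) / D - A = (i - A * B) / D := by omega
    rw [he, Nat.mul_comm ((i - A * B) / D) D]
    have := Nat.div_add_mod (i - A * B) D
    omega

lemma bW_bpos (hs : s < A + C) (ho : o < bsz A B C D s) :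
    bW A B C D (bpos A B C D s o) = 3 * s + (if o = 0 then 0 else 1) := by
  obtain ⟨h1, h2⟩ := bblk_bpos hs ho
  unfold bW; rw [h1, h2]

lemma bpos_injOn (hs : s < A + C) (ho : o < bsz A B C D s) (hs' : s' < A + C)
    (ho' : o' < bsz A B C D s') (h : bpos A B C D s o = bpos A B C D s' o') :
    s = s' ∧ o = o' := by
  obtain ⟨a1, a2⟩ := bblk_bpos hs ho
  obtain ⟨b1, b2⟩ := bblk_bpos hs' ho'
  rw [h] at a1 a2
  exact ⟨a1.symm.trans b1, a2.symm.trans b2⟩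

lemma bpos_lt_same (hs : s < A + C) : bpos A B C D s o < bpos A B C D s o' ↔ o < o' := by
  unfold bpos
  by_cases h : s < A <;> simp [h] <;> omega

lemma blockGraph_adj (hs : s < A + C) (ho : o < bsz A B C D s) (hs' : s' < A + C)
    (ho' : o' < bsz A B C D s') (hne : ¬ (s = s' ∧ o = o')) :
    ((blockGraph A B C D).Adj ⟨bpos A B C D s o, bpos_lt hs ho⟩
      ⟨bpos A B C D s' o', bpos_lt hs' ho'⟩ ↔ (s = s' ∧ (o = 0 ∨ o' = 0))) := by
  rw [blockGraph, letterGraph_adj]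
  have w1 := bW_bpos (A := A) (B := B) (C := C) (D := D) hs ho
  have w2 := bW_bpos (A := A) (B := B) (C := C) (D := D) hs' ho'
  simp only [Fin.mk_lt_mk]
  constructor
  · rintro (⟨hlt, hw⟩ | ⟨hlt, hw⟩)
    · rw [w1, w2] at hw
      have e1 : (if o = 0 then 0 else 1) = 0 ∨ (if o = 0 then 0 else 1) = 1 := by
        split <;> simp
      have e2 : (if o' = 0 then 0 else 1) = 0 ∨ (if o' = 0 then 0 else 1) = 1 := by
        split <;> simp
      have hss : s = s' ∧ (if o = 0 then 0 else 1) = 0 := by omega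
      refine ⟨hss.1, Or.inl ?_⟩
      by_contra hz; simp [hz] at hss
    · rw [w1, w2] at hw
      have e1 : (if o = 0 then 0 else 1) = 0 ∨ (if o = 0 then 0 else 1) = 1 := by
        split <;> simp
      have e2 : (if o' = 0 then 0 else 1) = 0 ∨ (if o' = 0 then 0 else 1) = 1 := by
        split <;> simp
      have hss : s = s' ∧ (if o' = 0 then 0 else 1) = 0 := by omega
      refine ⟨hss.1, Or.inr ?_⟩
      by_contra hz; simp [hz] at hss
  · rintro ⟨rfl, ho0 | ho0⟩
    · subst ho0
      have hoo : o' ≠ 0 := fun h => hne ⟨rfl, h.symm⟩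
      left
      refine ⟨(bpos_lt_same hs).2 (by omega), ?_⟩
      rw [w1, w2]; simp [hoo]
    · subst ho0
      have hoo : o ≠ 0 := fun h => hne ⟨rfl, h⟩
      right
      refine ⟨(bpos_lt_same hs).2 (by omega), ?_⟩
      rw [w1, w2]; simp [hoo]

lemma blockGraph_adj' {s o s' o' : ℕ} (hs : s < A + C) (ho : o < bsz A B C D s)
    (hs' : s' < A + C) (ho' : o' < bsz A B C D s') (hne : ¬ (s = s' ∧ o = o'))
    {i j : Fin (bN A B C D)} (hi : (i : ℕ) = bpos A B C D s o)
    (hj : (j : ℕ) = bpos A B C D s' o') :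
    ((blockGraph A B C D).Adj i j ↔ (s = s' ∧ (o = 0 ∨ o' = 0))) := by
  obtain ⟨iv, hiv⟩ := i
  obtain ⟨jv, hjv⟩ := j
  simp only [Fin.val_mk] at hi hj
  subst hi; subst hj
  exact blockGraph_adj hs ho hs' ho' hne

lemma blockGraph_blk_eq_of_adj {i j : Fin (bN A B C D)}
    (h : (blockGraph A B C D).Adj i j) : bblk A B C D i = bblk A B C D j := by
  have e1 : (if boff A B C D (i : ℕ) = 0 then 0 else 1) = 0 ∨
      (if boff A B C D (i : ℕ) = 0 then 0 else 1) = 1 := by split <;> simp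
  have e2 : (if boff A B C D (j : ℕ) = 0 then 0 else 1) = 0 ∨
      (if boff A B C D (j : ℕ) = 0 then 0 else 1) = 1 := by split <;> simp
  rcases h with ⟨-, hw⟩ | ⟨-, hw⟩ <;> (unfold bW at hw; omega)

lemma blockGraph_reachable {i j : Fin (bN A B C D)} :
    (blockGraph A B C D).Reachable i j ↔ bblk A B C D (i : ℕ) = bblk A B C D (j : ℕ) := by
  constructor
  · intro h
    obtain ⟨p⟩ := h
    induction p with
    | nil => rfl
    | cons h _ ih => exact (blockGraph_blk_eq_of_adj h).trans ih
  · intro h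
    have key : ∀ y : Fin (bN A B C D), bblk A B C D (y : ℕ) = bblk A B C D (i : ℕ) →
        (blockGraph A B C D).Reachable y
          ⟨bpos A B C D (bblk A B C D (i : ℕ)) 0, by
            have d := bdecomp (A := A) (B := B) (C := C) (D := D) i.2
            exact bpos_lt d.1 (by omega)⟩ := by
      intro y hy
      have dy := bdecomp (A := A) (B := B) (C := C) (D := D) y.2
      have hrew : y = ⟨bpos A B C D (bblk A B C D (i : ℕ)) (boff A B C D (y : ℕ)), by
          rw [← hy]; rw [dy.2.2]; exact y.2⟩ := by
        apply Fin.ext; simp only [← hy]; exact dy.2.2.symm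
      by_cases h0 : boff A B C D (y : ℕ) = 0
      · rw [hrew]
        simp only [h0]
        exact Reachable.refl _
      · rw [hrew]
        refine Adj.reachable ?_
        have d := bdecomp (A := A) (B := B) (C := C) (D := D) i.2
        have := blockGraph_adj (A := A) (B := B) (C := C) (D := D)
          (s := bblk A B C D (i : ℕ)) (o := boff A B C D (y : ℕ))
          (s' := bblk A B C D (i : ℕ)) (o' := 0)
          d.1 (by rw [← hy]; exact dy.2.1) d.1 (by omega) (by tauto)
        exact this.2 ⟨rfl, Or.inr rfl⟩
    exact (key i rfl).trans (key j h.symm).symm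

lemma isStarForest_blockGraph : IsStarForest (blockGraph A B C D) := by
  intro c
  obtain ⟨x, hx⟩ := c.exists_rep
  have dx := bdecomp (A := A) (B := B) (C := C) (D := D) x.2
  set s := bblk A B C D (x : ℕ) with hsdef
  have hsz : 0 < bsz A B C D s := lt_of_le_of_lt (Nat.zero_le _) dx.2.1
  have hp : bsz A B C D s - 1 + 1 = bsz A B C D s := by omega
  have hmem : ∀ y : Fin (bN A B C D), y ∈ c.supp ↔ bblk A B C D (y : ℕ) = s := by
    intro y
    have hx' : (blockGraph A B C D).connectedComponentMk x = c := hx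
    rw [ConnectedComponent.mem_supp_iff, ← hx', ConnectedComponent.eq]
    exact blockGraph_reachable
  refine ⟨bsz A B C D s - 1, ⟨?_⟩⟩
  refine ⟨⟨fun y => ⟨boff A B C D ((y : Fin (bN A B C D)) : ℕ), ?_⟩,
      fun o => ⟨⟨bpos A B C D s (o : ℕ), bpos_lt dx.1 (by omega)⟩, ?_⟩, ?_, ?_⟩, ?_⟩
  · -- boff y < p + 1
    have hy := (hmem y).1 y.2
    have dy := bdecomp (A := A) (B := B) (C := C) (D := D) (y : Fin (bN A B C D)).2
    rw [hp, ← hy]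
    exact dy.2.1
  · -- membership of bpos s o
    rw [hmem]
    exact (bblk_bpos dx.1 (by omega)).1
  · -- left inverse
    intro y
    have hy := (hmem y).1 y.2
    have dy := bdecomp (A := A) (B := B) (C := C) (D := D) (y : Fin (bN A B C D)).2
    apply Subtype.ext; apply Fin.ext
    simp only [← hy]
    exact dy.2.2
  · -- right inverse
    intro o
    apply Fin.ext
    exact (bblk_bpos dx.1 (by omega)).2
  · -- map_rel_iff
    intro a b
    have ha := (hmem a).1 a.2
    have hb := (hmem b).1 b.2
    have da := bdecomp (A := A) (B := B) (C := C) (D := D) (a : Fin (bN A B C D)).2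
    have db := bdecomp (A := A) (B := B) (C := C) (D := D) (b : Fin (bN A B C D)).2
    by_cases hab : boff A B C D ((a : Fin (bN A B C D)) : ℕ)
        = boff A B C D ((b : Fin (bN A B C D)) : ℕ)
    · have hvab : (a : Fin (bN A B C D)) = b := by
        apply Fin.ext
        rw [← da.2.2, ← db.2.2, ha, hb, hab]
      have hab2 : a = b := Subtype.ext hvab
      subst hab2
      constructor
      · intro h; exact absurd h (SimpleGraph.irrefl _)
      · intro h; exact absurd h (SimpleGraph.irrefl _)
    · have hchar := blockGraph_adj' (A := A) (B := B) (C := C) (D := D)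
        (s := s) (o := boff A B C D ((a : Fin (bN A B C D)) : ℕ))
        (s' := s) (o' := boff A B C D ((b : Fin (bN A B C D)) : ℕ))
        dx.1 (by rw [← ha]; exact da.2.1) dx.1 (by rw [← hb]; exact db.2.1)
        (by tauto)
        (i := (a : Fin (bN A B C D))) (j := (b : Fin (bN A B C D)))
        (by rw [← ha]; exact da.2.2.symm) (by rw [← hb]; exact db.2.2.symm)
      have hstar : (_root_.starGraph (bsz A B C D s - 1)).Adj
          ⟨boff A B C D ((a : Fin (bN A B C D)) : ℕ), by rw [hp, ← ha]; exact da.2.1⟩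
          ⟨boff A B C D ((b : Fin (bN A B C D)) : ℕ), by rw [hp, ← hb]; exact db.2.1⟩
          ↔ (boff A B C D ((a : Fin (bN A B C D)) : ℕ) = 0 ∨
             boff A B C D ((b : Fin (bN A B C D)) : ℕ) = 0) := by
        rw [_root_.starGraph, SimpleGraph.fromRel_adj]
        constructor
        · rintro ⟨-, h | h⟩
          · left; exact congrArg Fin.val h
          · right; exact congrArg Fin.val h
        · intro h
          refine ⟨by simpa [Fin.ext_iff] using hab, ?_⟩
          rcases h with h | h
          · left; exact Fin.ext h
          · right; exact Fin.ext h
      have hfin : (boff A B C D ((a : Fin (bN A B C D)) : ℕ) = 0 ∨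
          boff A B C D ((b : Fin (bN A B C D)) : ℕ) = 0)
          ↔ ((blockGraph A B C D).induce c.supp).Adj a b := by
        constructor
        · intro h; exact hchar.2 ⟨rfl, h⟩
        · intro h; exact (hchar.1 h).2
      exact hstar.trans hfin

/-! ### Abstract star forests -/

lemma mem_supp_self {V : Type*} (G : SimpleGraph V) (v : V) :
    v ∈ (G.connectedComponentMk v).supp := by
  rw [ConnectedComponent.mem_supp_iff]

lemma card_comp_le {m : ℕ} (G : SimpleGraph (Fin m)) : Nat.card G.ConnectedComponent ≤ m := by
  have hs : Function.Surjective (G.connectedComponentMk) := fun c => c.exists_rep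
  simpa using Nat.card_le_card_of_surjective _ hs

lemma card_supp_le {m : ℕ} (G : SimpleGraph (Fin m)) (c : G.ConnectedComponent) :
    Nat.card c.supp ≤ m := by
  have := Nat.card_le_card_of_injective (Subtype.val : c.supp → Fin m) Subtype.val_injective
  rwa [Nat.card_eq_fintype_card (α := Fin m), Fintype.card_fin] at this

lemma starGraph_adj {p : ℕ} {x y : Fin (p + 1)} :
    (_root_.starGraph p).Adj x y ↔ x ≠ y ∧ ((x : ℕ) = 0 ∨ (y : ℕ) = 0) := by
  rw [_root_.starGraph, SimpleGraph.fromRel_adj]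
  constructor
  · rintro ⟨hne, h | h⟩
    · exact ⟨hne, Or.inl (congrArg Fin.val h)⟩
    · exact ⟨hne, Or.inr (congrArg Fin.val h)⟩
  · rintro ⟨hne, h | h⟩
    · exact ⟨hne, Or.inl (Fin.ext h)⟩
    · exact ⟨hne, Or.inr (Fin.ext h)⟩

/-- Embedding a star forest into a block graph, given an injective assignment of
components to blocks with enough capacity. -/
lemma emb_into_blocks {m : ℕ} (G : SimpleGraph (Fin m)) (hG : IsStarForest G)
    (A B C D : ℕ) (β : G.ConnectedComponent → ℕ) (hβi : Function.Injective β)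
    (hβlt : ∀ c, β c < A + C)
    (hcap : ∀ c : G.ConnectedComponent, Nat.card c.supp ≤ bsz A B C D (β c)) :
    Nonempty (G ↪g blockGraph A B C D) := by
  classical
  choose p φ using hG
  have hcard : ∀ c, Nat.card c.supp = p c + 1 := fun c => by
    rw [Nat.card_congr ((φ c).some.toEquiv)]; simp
  have hov : ∀ (c : G.ConnectedComponent) (x : c.supp),
      (((φ c).some x : Fin (p c + 1)) : ℕ) < bsz A B C D (β c) := fun c x =>
    lt_of_lt_of_le ((φ c).some x).isLt (by rw [← hcard c]; exact hcap c)
  let F : ∀ c : G.ConnectedComponent, c.supp → Fin (bN A B C D) := fun c x =>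
    ⟨bpos A B C D (β c) (((φ c).some x : Fin (p c + 1)) : ℕ), bpos_lt (hβlt c) (hov c x)⟩
  let f : Fin m → Fin (bN A B C D) := fun v =>
    F (G.connectedComponentMk v) ⟨v, mem_supp_self G v⟩
  have keyinj : ∀ (c c' : G.ConnectedComponent) (_ : c = c') (x : c.supp) (y : c'.supp),
      (((φ c).some x : Fin (p c + 1)) : ℕ) = (((φ c').some y : Fin (p c' + 1)) : ℕ) →
      (x : Fin m) = (y : Fin m) := by
    rintro c c' rfl x y h
    exact congrArg Subtype.val ((φ c).some.toEquiv.injective (Fin.ext h))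
  have keyadj : ∀ (c c' : G.ConnectedComponent) (_ : c = c') (x : c.supp) (y : c'.supp),
      (x : Fin m) ≠ (y : Fin m) →
      (G.Adj x y ↔ ((((φ c).some x : Fin (p c + 1)) : ℕ) = 0 ∨
        (((φ c').some y : Fin (p c' + 1)) : ℕ) = 0)) := by
    rintro c c' rfl x y hxy
    have h1 : G.Adj ↑x ↑y ↔ (G.induce c.supp).Adj x y := Iff.rfl
    rw [h1, ← (φ c).some.map_rel_iff, _root_.starGraph_adj]
    constructor
    · rintro ⟨-, h⟩; exact h
    · intro h
      refine ⟨fun he => hxy ?_, h⟩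
      exact congrArg Subtype.val ((φ c).some.toEquiv.injective he)
  refine ⟨⟨⟨f, ?_⟩, ?_⟩⟩
  · -- injective
    intro u v huv
    have h1 : bpos A B C D (β (G.connectedComponentMk u))
        (((φ (G.connectedComponentMk u)).some ⟨u, mem_supp_self G u⟩ :
          Fin (p (G.connectedComponentMk u) + 1)) : ℕ)
        = bpos A B C D (β (G.connectedComponentMk v))
        (((φ (G.connectedComponentMk v)).some ⟨v, mem_supp_self G v⟩ :
          Fin (p (G.connectedComponentMk v) + 1)) : ℕ) := congrArg Fin.val huv
    obtain ⟨hs, ho⟩ := bpos_injOn (hβlt _) (hov _ _) (hβlt _) (hov _ _) h1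
    exact keyinj _ _ (hβi hs) _ _ ho
  · -- map_rel_iff
    intro u v
    show (blockGraph A B C D).Adj (f u) (f v) ↔ G.Adj u v
    by_cases huv : u = v
    · subst huv
      simp
    · by_cases hc : G.connectedComponentMk u = G.connectedComponentMk v
      · have hone : (((φ (G.connectedComponentMk u)).some ⟨u, mem_supp_self G u⟩ :
            Fin (p (G.connectedComponentMk u) + 1)) : ℕ)
            ≠ (((φ (G.connectedComponentMk v)).some ⟨v, mem_supp_self G v⟩ :
            Fin (p (G.connectedComponentMk v) + 1)) : ℕ) :=
          fun h => huv (keyinj _ _ hc _ _ h)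
        have hadj := blockGraph_adj' (A := A) (B := B) (C := C) (D := D)
          (hβlt _) (hov _ _) (hβlt _) (hov _ _) (fun h => hone h.2)
          (i := f u) (j := f v) rfl rfl
        rw [hadj, keyadj _ _ hc ⟨u, mem_supp_self G u⟩ ⟨v, mem_supp_self G v⟩ huv]
        constructor
        · exact fun h => h.2
        · exact fun h => ⟨congrArg β hc, h⟩
      · have hβ : β (G.connectedComponentMk u) ≠ β (G.connectedComponentMk v) :=
          fun h => hc (hβi h)
        have hadj := blockGraph_adj' (A := A) (B := B) (C := C) (D := D)
          (hβlt _) (hov _ _) (hβlt _) (hov _ _) (fun h => hβ h.1)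
          (i := f u) (j := f v) rfl rfl
        rw [hadj]
        constructor
        · rintro ⟨h, -⟩; exact absurd h hβ
        · intro h; exact absurd (ConnectedComponent.sound h.reachable) hc

/-- Embedding a block graph (one section of `t` blocks of size `D`) into a star forest
with `t` designated components of size at least `D`. -/
lemma blocks_emb_into {m : ℕ} (G : SimpleGraph (Fin m)) (hG : IsStarForest G)
    (t D : ℕ) (ι : Fin t → G.ConnectedComponent) (hι : Function.Injective ι)
    (hcap : ∀ s, D ≤ Nat.card (ι s).supp) :
    Nonempty (blockGraph 0 0 t D ↪g G) := by
  classical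
  choose p φ using hG
  have hcard : ∀ c, Nat.card c.supp = p c + 1 := fun c => by
    rw [Nat.card_congr ((φ c).some.toEquiv)]; simp
  have hD : ∀ s : Fin t, ∀ o : ℕ, o < D → o < p (ι s) + 1 := fun s o ho =>
    lt_of_lt_of_le ho (by rw [← hcard (ι s)]; exact hcap s)
  -- decompose a position
  have hdec : ∀ i : Fin (bN 0 0 t D), bblk 0 0 t D (i : ℕ) < t ∧
      boff 0 0 t D (i : ℕ) < D ∧
      bpos 0 0 t D (bblk 0 0 t D (i : ℕ)) (boff 0 0 t D (i : ℕ)) = (i : ℕ) := by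
    intro i
    have d := bdecomp (A := 0) (B := 0) (C := t) (D := D) i.2
    refine ⟨by omega, ?_, d.2.2⟩
    have h2 : bsz 0 0 t D (bblk 0 0 t D (i : ℕ)) = D := by
      rw [bsz]; simp
    exact lt_of_lt_of_le d.2.1 (le_of_eq h2)
  let f : Fin (bN 0 0 t D) → Fin m := fun i =>
    ((((φ (ι ⟨bblk 0 0 t D (i : ℕ), (hdec i).1⟩)).some.symm
      ⟨boff 0 0 t D (i : ℕ), hD _ _ (hdec i).2.1⟩ : _)) : Fin m)
  have hmemf : ∀ i : Fin (bN 0 0 t D),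
      f i ∈ (ι ⟨bblk 0 0 t D (i : ℕ), (hdec i).1⟩).supp := fun i =>
    ((φ (ι ⟨bblk 0 0 t D (i : ℕ), (hdec i).1⟩)).some.symm
      ⟨boff 0 0 t D (i : ℕ), hD _ _ (hdec i).2.1⟩).2
  have hcmp : ∀ i : Fin (bN 0 0 t D),
      G.connectedComponentMk (f i) = ι ⟨bblk 0 0 t D (i : ℕ), (hdec i).1⟩ := fun i =>
    (ConnectedComponent.mem_supp_iff _ _).1 (hmemf i)
  have keyval : ∀ (c c' : G.ConnectedComponent) (_ : c = c') (x : Fin (p c + 1))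
      (y : Fin (p c' + 1)), ((x : ℕ) = (y : ℕ)) →
      (((φ c).some.symm x : c.supp) : Fin m) = (((φ c').some.symm y : c'.supp) : Fin m) := by
    rintro c c' rfl x y h
    rw [Fin.ext h]
  have keyadj : ∀ (c c' : G.ConnectedComponent) (_ : c = c') (x : Fin (p c + 1))
      (y : Fin (p c' + 1)), (x : ℕ) ≠ (y : ℕ) →
      (G.Adj ((φ c).some.symm x : c.supp) ((φ c').some.symm y : c'.supp) ↔
        ((x : ℕ) = 0 ∨ (y : ℕ) = 0)) := by
    rintro c c' rfl x y hxy
    have h1 : G.Adj ((φ c).some.symm x : c.supp) ((φ c).some.symm y : c.supp)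
        ↔ (G.induce c.supp).Adj ((φ c).some.symm x) ((φ c).some.symm y) := Iff.rfl
    rw [h1, ← (φ c).some.map_rel_iff, _root_.starGraph_adj]
    rw [RelIso.apply_symm_apply, RelIso.apply_symm_apply]
    constructor
    · rintro ⟨-, h⟩; exact h
    · intro h; exact ⟨fun he => hxy (congrArg Fin.val he), h⟩
  refine ⟨⟨⟨f, ?_⟩, ?_⟩⟩
  · intro i j hij
    have hblk : bblk 0 0 t D (i : ℕ) = bblk 0 0 t D (j : ℕ) := by
      have h1 := hcmp i
      have h2 := hcmp j
      rw [hij] at h1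
      have := hι (h1.symm.trans h2)
      exact congrArg Fin.val this
    have hsame : (⟨bblk 0 0 t D (i : ℕ), (hdec i).1⟩ : Fin t)
        = ⟨bblk 0 0 t D (j : ℕ), (hdec j).1⟩ := Fin.ext hblk
    have hoff : boff 0 0 t D (i : ℕ) = boff 0 0 t D (j : ℕ) := by
      have hval : (((φ (ι ⟨bblk 0 0 t D (i : ℕ), (hdec i).1⟩)).some.symm
          ⟨boff 0 0 t D (i : ℕ), hD _ _ (hdec i).2.1⟩ : _) : Fin m)
          = (((φ (ι ⟨bblk 0 0 t D (j : ℕ), (hdec j).1⟩)).some.symm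
          ⟨boff 0 0 t D (j : ℕ), hD _ _ (hdec j).2.1⟩ : _) : Fin m) := hij
      -- use injectivity after transporting along hsame
      have keyinv : ∀ (c c' : G.ConnectedComponent) (_ : c = c') (x : Fin (p c + 1))
          (y : Fin (p c' + 1)),
          (((φ c).some.symm x : c.supp) : Fin m) = (((φ c').some.symm y : c'.supp) : Fin m) →
          (x : ℕ) = (y : ℕ) := by
        rintro c c' rfl x y h
        have := (φ c).some.symm.toEquiv.injective (Subtype.ext h)
        exact congrArg Fin.val this
      exact keyinv _ _ (congrArg ι hsame) _ _ hval
    apply Fin.ext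
    rw [← (hdec i).2.2, ← (hdec j).2.2, hblk, hoff]
  · intro i j
    suffices h : (blockGraph 0 0 t D).Adj i j ↔ G.Adj (f i) (f j) by exact h.symm
    by_cases hij : i = j
    · subst hij
      simp
    · by_cases hblk : bblk 0 0 t D (i : ℕ) = bblk 0 0 t D (j : ℕ)
      · have hoff : boff 0 0 t D (i : ℕ) ≠ boff 0 0 t D (j : ℕ) := by
          intro h
          apply hij
          apply Fin.ext
          rw [← (hdec i).2.2, ← (hdec j).2.2, hblk, h]
        have hadj := blockGraph_adj' (A := 0) (B := 0) (C := t) (D := D)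
          (s := bblk 0 0 t D (i : ℕ)) (o := boff 0 0 t D (i : ℕ))
          (s' := bblk 0 0 t D (j : ℕ)) (o' := boff 0 0 t D (j : ℕ))
          (by have := (hdec i).1; omega) (by rw [bsz]; simp; exact (hdec i).2.1)
          (by have := (hdec j).1; omega) (by rw [bsz]; simp; exact (hdec j).2.1)
          (fun h => hoff h.2) (i := i) (j := j) (hdec i).2.2.symm (hdec j).2.2.symm
        rw [hadj]
        have hsame : (⟨bblk 0 0 t D (i : ℕ), (hdec i).1⟩ : Fin t)
            = ⟨bblk 0 0 t D (j : ℕ), (hdec j).1⟩ := Fin.ext hblk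
        rw [keyadj _ _ (congrArg ι hsame) _ _ hoff]
        constructor
        · exact fun h => h.2
        · exact fun h => ⟨hblk, h⟩
      · have hadj := blockGraph_adj' (A := 0) (B := 0) (C := t) (D := D)
          (s := bblk 0 0 t D (i : ℕ)) (o := boff 0 0 t D (i : ℕ))
          (s' := bblk 0 0 t D (j : ℕ)) (o' := boff 0 0 t D (j : ℕ))
          (by have := (hdec i).1; omega) (by rw [bsz]; simp; exact (hdec i).2.1)
          (by have := (hdec j).1; omega) (by rw [bsz]; simp; exact (hdec j).2.1)
          (fun h => hblk h.1) (i := i) (j := j) (hdec i).2.2.symm (hdec j).2.2.symm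
        rw [hadj]
        constructor
        · rintro ⟨h, -⟩; exact absurd h hblk
        · intro h
          exfalso
          apply hblk
          have h1 := hcmp i
          have h2 := hcmp j
          have h3 : G.connectedComponentMk (f i) = G.connectedComponentMk (f j) :=
            ConnectedComponent.sound h.reachable
          have := hι ((h1.symm.trans h3).trans h2)
          exact congrArg Fin.val this

/-! ### Core counting lemma for the lower bound -/

lemma core_count {M A B : ℕ} (hB : 2 ≤ B) (lam : Fin M → ℕ) (g : Fin A → Fin B → Fin M)
    (hinj : ∀ s o s' o', g s o = g s' o' → s = s' ∧ o = o')
    (hg : ∀ (s : Fin A) (o : Fin B) (s' : Fin A) (o' : Fin B), ¬(s = s' ∧ o = o') →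
      (((g s o < g s' o' ∧ lam (g s' o') = lam (g s o) + 1) ∨
        (g s' o' < g s o ∧ lam (g s o) = lam (g s' o') + 1))
        ↔ (s = s' ∧ ((o : ℕ) = 0 ∨ (o' : ℕ) = 0)))) :
    A ≤ 2 * ((Finset.image lam Finset.univ).filter
      (fun j => B / 2 ≤ (Finset.univ.filter (fun x => lam x = j)).card)).card := by
  classical
  have hB0 : 0 < B := by omega
  set z : Fin B := ⟨0, hB0⟩ with hz
  set ctr : Fin A → Fin M := fun s => g s z with hctr
  set ell : Fin A → ℕ := fun s => lam (ctr s) with hell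
  set Bs : Fin A → Finset (Fin B) :=
    fun s => Finset.univ.filter (fun o => (o : ℕ) ≠ 0 ∧ g s o < ctr s) with hBs
  set As : Fin A → Finset (Fin B) :=
    fun s => Finset.univ.filter (fun o => (o : ℕ) ≠ 0 ∧ ctr s < g s o) with hAs
  have hne0 : ∀ o : Fin B, (o : ℕ) ≠ 0 → ¬(o = z) := by
    intro o h hh; rw [hh] at h; exact h rfl
  have hBlab : ∀ s, ∀ o ∈ Bs s, lam (g s o) + 1 = ell s := by
    intro s o ho
    rw [hBs, Finset.mem_filter] at ho
    have h := (hg s o s z (fun hp => hne0 o ho.2.1 hp.2)).2 ⟨rfl, Or.inr rfl⟩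
    rcases h with ⟨-, hw⟩ | ⟨hlt, -⟩
    · exact hw.symm
    · exact absurd hlt (asymm ho.2.2)
  have hAlab : ∀ s, ∀ o ∈ As s, lam (g s o) = ell s + 1 := by
    intro s o ho
    rw [hAs, Finset.mem_filter] at ho
    have h := (hg s o s z (fun hp => hne0 o ho.2.1 hp.2)).2 ⟨rfl, Or.inr rfl⟩
    rcases h with ⟨hlt, -⟩ | ⟨-, hw⟩
    · exact absurd hlt (asymm ho.2.2)
    · exact hw
  have hsum : ∀ s, B - 1 ≤ (Bs s).card + (As s).card := by
    intro s
    have hsub : Finset.univ.filter (fun o : Fin B => (o : ℕ) ≠ 0) ⊆ Bs s ∪ As s := by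
      intro o ho
      rw [Finset.mem_filter] at ho
      have hne : g s o ≠ ctr s := by
        intro h
        exact ho.2 (congrArg Fin.val (hinj s o s z h).2)
      rcases lt_or_gt_of_ne hne with h | h
      · exact Finset.mem_union_left _ (by rw [hBs, Finset.mem_filter]; exact ⟨Finset.mem_univ _, ho.2, h⟩)
      · exact Finset.mem_union_right _ (by rw [hAs, Finset.mem_filter]; exact ⟨Finset.mem_univ _, ho.2, h⟩)
    have hcnt : (Finset.univ.filter (fun o : Fin B => (o : ℕ) ≠ 0)).card = B - 1 := by
      have : (Finset.univ.filter (fun o : Fin B => (o : ℕ) ≠ 0)) = Finset.univ.erase z := by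
        ext o
        simp [Fin.ext_iff, hz]
      rw [this, Finset.card_erase_of_mem (Finset.mem_univ _)]
      simp
    calc B - 1 = (Finset.univ.filter (fun o : Fin B => (o : ℕ) ≠ 0)).card := hcnt.symm
      _ ≤ (Bs s ∪ As s).card := Finset.card_le_card hsub
      _ ≤ (Bs s).card + (As s).card := Finset.card_union_le _ _
  set τ : Fin A → ℕ := fun s => if B / 2 ≤ (Bs s).card then ell s - 1 else ell s + 1 with hτ
  -- each τ s lands in the big-label set
  have hτgood : ∀ s, τ s ∈ (Finset.image lam Finset.univ).filter
      (fun j => B / 2 ≤ (Finset.univ.filter (fun x => lam x = j)).card) := by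
    intro s
    rw [Finset.mem_filter]
    by_cases hb : B / 2 ≤ (Bs s).card
    · have hτs : τ s = ell s - 1 := by rw [hτ]; simp [hb]
      have hne : (Bs s).Nonempty := Finset.card_pos.1 (by omega)
      obtain ⟨o₀, ho₀⟩ := hne
      have hlab := hBlab s o₀ ho₀
      have hval : lam (g s o₀) = τ s := by omega
      constructor
      · exact Finset.mem_image.2 ⟨g s o₀, Finset.mem_univ _, hval⟩
      · calc B / 2 ≤ (Bs s).card := hb
          _ ≤ (Finset.univ.filter (fun x => lam x = τ s)).card := by
            apply Finset.card_le_card_of_injOn (fun o => g s o)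
            · intro o ho
              rw [Finset.mem_coe, Finset.mem_filter]
              have := hBlab s o ho
              exact ⟨Finset.mem_univ _, by beta_reduce; omega⟩
            · intro o _ o' _ h
              exact (hinj s o s o' h).2
    · have ha : B / 2 ≤ (As s).card := by
        have := hsum s
        omega
      have hτs : τ s = ell s + 1 := by rw [hτ]; simp [hb]
      have hne : (As s).Nonempty := Finset.card_pos.1 (by omega)
      obtain ⟨o₀, ho₀⟩ := hne
      have hlab := hAlab s o₀ ho₀
      have hval : lam (g s o₀) = τ s := by omega
      constructor
      · exact Finset.mem_image.2 ⟨g s o₀, Finset.mem_univ _, hval⟩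
      · calc B / 2 ≤ (As s).card := ha
          _ ≤ (Finset.univ.filter (fun x => lam x = τ s)).card := by
            apply Finset.card_le_card_of_injOn (fun o => g s o)
            · intro o ho
              rw [Finset.mem_coe, Finset.mem_filter]
              have := hAlab s o ho
              exact ⟨Finset.mem_univ _, by beta_reduce; omega⟩
            · intro o _ o' _ h
              exact (hinj s o s o' h).2
  -- fibers of τ have size at most 2
  have hfib : ∀ j ∈ Finset.univ.image τ, (Finset.univ.filter (fun s => τ s = j)).card ≤ 2 := by
    intro j _
    have hsplit : Finset.univ.filter (fun s => τ s = j) ⊆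
        (Finset.univ.filter (fun s => τ s = j ∧ B / 2 ≤ (Bs s).card)) ∪
        (Finset.univ.filter (fun s => τ s = j ∧ ¬ B / 2 ≤ (Bs s).card)) := by
      intro s hs
      rw [Finset.mem_filter] at hs
      by_cases hb : B / 2 ≤ (Bs s).card
      · exact Finset.mem_union_left _ (Finset.mem_filter.2 ⟨hs.1, hs.2, hb⟩)
      · exact Finset.mem_union_right _ (Finset.mem_filter.2 ⟨hs.1, hs.2, hb⟩)
    have hcB : (Finset.univ.filter (fun s => τ s = j ∧ B / 2 ≤ (Bs s).card)).card ≤ 1 := by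
      rw [Finset.card_le_one]
      intro s hs s' hs'
      rw [Finset.mem_filter] at hs hs'
      by_contra hne
      obtain ⟨-, hjs, hbs⟩ := hs
      obtain ⟨-, hjs', hbs'⟩ := hs'
      obtain ⟨o₀, ho₀⟩ := Finset.card_pos.1 (show 0 < (Bs s).card by omega)
      obtain ⟨o₁, ho₁⟩ := Finset.card_pos.1 (show 0 < (Bs s').card by omega)
      have hl0 := hBlab s o₀ ho₀
      have hl1 := hBlab s' o₁ ho₁
      have hd0 : ell s = lam (g s z) := rfl
      have hd1 : ell s' = lam (g s' z) := rfl
      have hell0 : ell s = ell s' := by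
        have e0 : τ s = ell s - 1 := by rw [hτ]; simp [hbs]
        have e1 : τ s' = ell s' - 1 := by rw [hτ]; simp [hbs']
        omega
      rw [hBs, Finset.mem_filter] at ho₀ ho₁
      have hL1 : ¬ ((g s o₀ < g s' z ∧ lam (g s' z) = lam (g s o₀) + 1) ∨
          (g s' z < g s o₀ ∧ lam (g s o₀) = lam (g s' z) + 1)) :=
        fun hl => hne ((hg s o₀ s' z (fun hp => hne hp.1)).1 hl).1
      have hn1 : ¬ (g s o₀ < ctr s') := fun hlt => hL1 (Or.inl ⟨hlt, by omega⟩)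
      have hne1 : g s o₀ ≠ ctr s' := fun h => hne (hinj _ _ _ _ h).1
      have hgt1 : ctr s' < g s o₀ := (lt_or_gt_of_ne hne1).resolve_left hn1
      have hL2 : ¬ ((g s' o₁ < g s z ∧ lam (g s z) = lam (g s' o₁) + 1) ∨
          (g s z < g s' o₁ ∧ lam (g s' o₁) = lam (g s z) + 1)) :=
        fun hl => hne (((hg s' o₁ s z (fun hp => hne hp.1.symm)).1 hl).1).symm
      have hn2 : ¬ (g s' o₁ < ctr s) := fun hlt => hL2 (Or.inl ⟨hlt, by omega⟩)
      have hne2 : g s' o₁ ≠ ctr s := fun h => hne (hinj _ _ _ _ h).1.symm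
      have hgt2 : ctr s < g s' o₁ := (lt_or_gt_of_ne hne2).resolve_left hn2
      exact absurd (lt_trans (lt_trans hgt1 ho₀.2.2) (lt_trans hgt2 ho₁.2.2))
        (lt_irrefl (ctr s'))
    have hcA : (Finset.univ.filter (fun s => τ s = j ∧ ¬ B / 2 ≤ (Bs s).card)).card ≤ 1 := by
      rw [Finset.card_le_one]
      intro s hs s' hs'
      rw [Finset.mem_filter] at hs hs'
      by_contra hne
      obtain ⟨-, hjs, hbs⟩ := hs
      obtain ⟨-, hjs', hbs'⟩ := hs'
      have has : B / 2 ≤ (As s).card := by have := hsum s; omega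
      have has' : B / 2 ≤ (As s').card := by have := hsum s'; omega
      obtain ⟨o₀, ho₀⟩ := Finset.card_pos.1 (show 0 < (As s).card by omega)
      obtain ⟨o₁, ho₁⟩ := Finset.card_pos.1 (show 0 < (As s').card by omega)
      have hl0 := hAlab s o₀ ho₀
      have hl1 := hAlab s' o₁ ho₁
      have hd0 : ell s = lam (g s z) := rfl
      have hd1 : ell s' = lam (g s' z) := rfl
      have hell0 : ell s = ell s' := by
        have e0 : τ s = ell s + 1 := by rw [hτ]; simp [hbs]
        have e1 : τ s' = ell s' + 1 := by rw [hτ]; simp [hbs']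
        omega
      rw [hAs, Finset.mem_filter] at ho₀ ho₁
      have hL1 : ¬ ((g s o₀ < g s' z ∧ lam (g s' z) = lam (g s o₀) + 1) ∨
          (g s' z < g s o₀ ∧ lam (g s o₀) = lam (g s' z) + 1)) :=
        fun hl => hne ((hg s o₀ s' z (fun hp => hne hp.1)).1 hl).1
      have hn1 : ¬ (ctr s' < g s o₀) := fun hlt => hL1 (Or.inr ⟨hlt, by omega⟩)
      have hne1 : g s o₀ ≠ ctr s' := fun h => hne (hinj _ _ _ _ h).1
      have hlt1 : g s o₀ < ctr s' := (lt_or_gt_of_ne hne1).resolve_right hn1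
      have hL2 : ¬ ((g s' o₁ < g s z ∧ lam (g s z) = lam (g s' o₁) + 1) ∨
          (g s z < g s' o₁ ∧ lam (g s' o₁) = lam (g s z) + 1)) :=
        fun hl => hne (((hg s' o₁ s z (fun hp => hne hp.1.symm)).1 hl).1).symm
      have hn2 : ¬ (ctr s < g s' o₁) := fun hlt => hL2 (Or.inr ⟨hlt, by omega⟩)
      have hne2 : g s' o₁ ≠ ctr s := fun h => hne (hinj _ _ _ _ h).1.symm
      have hlt2 : g s' o₁ < ctr s := (lt_or_gt_of_ne hne2).resolve_right hn2
      exact absurd (lt_trans (lt_trans ho₀.2.2 hlt1) (lt_trans ho₁.2.2 hlt2))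
        (lt_irrefl (ctr s))
    calc (Finset.univ.filter (fun s => τ s = j)).card
        ≤ ((Finset.univ.filter (fun s => τ s = j ∧ B / 2 ≤ (Bs s).card)) ∪
          (Finset.univ.filter (fun s => τ s = j ∧ ¬ B / 2 ≤ (Bs s).card))).card :=
          Finset.card_le_card hsplit
      _ ≤ _ + _ := Finset.card_union_le _ _
      _ ≤ 2 := by omega
  have himg : Finset.univ.image τ ⊆ (Finset.image lam Finset.univ).filter
      (fun j => B / 2 ≤ (Finset.univ.filter (fun x => lam x = j)).card) := by
    intro j hj
    obtain ⟨s, -, rfl⟩ := Finset.mem_image.1 hj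
    exact hτgood s
  calc A = (Finset.univ : Finset (Fin A)).card := by simp
    _ ≤ 2 * (Finset.univ.image τ).card := Finset.card_le_mul_card_image _ 2 hfib
    _ ≤ _ := Nat.mul_le_mul_left _ (Finset.card_le_card himg)

/-! ### Part 1: no linear universal BPG for star forests -/

lemma two_geo_sum : ∀ R : ℕ, (∑ i ∈ Finset.range R, 2 ^ i) = 2 ^ R - 1 := by
  intro R
  induction R with
  | zero => simp
  | succ R ih =>
    rw [Finset.sum_range_succ, ih, pow_succ]
    have : 1 ≤ 2 ^ R := Nat.one_le_two_pow
    omega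

lemma geom_ite_bound (R F : ℕ) :
    (∑ i ∈ Finset.range R, if 2 ^ i ≤ F then 2 ^ i else 0) ≤ 2 * F := by
  induction R with
  | zero => simp
  | succ R ih =>
    rw [Finset.sum_range_succ]
    by_cases h : 2 ^ R ≤ F
    · have hle : (∑ i ∈ Finset.range R, if 2 ^ i ≤ F then 2 ^ i else 0)
          ≤ ∑ i ∈ Finset.range R, 2 ^ i := Finset.sum_le_sum (fun i _ => by split <;> omega)
      rw [if_pos h]
      have hg := two_geo_sum R
      have h1 : 1 ≤ 2 ^ R := Nat.one_le_two_pow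
      omega
    · rw [if_neg h]
      simpa using ih

lemma no_linear_universal_starforests : ¬ LinearUniversal StarForestClass := by
  rintro ⟨C, hC⟩
  set r := 8 * C + 2 with hr
  obtain ⟨N, H, hN, hBPG, huniv⟩ := hC (2 ^ r) Nat.one_le_two_pow
  obtain ⟨k, v, w, hw⟩ := hBPG
  set lam : Fin (Fintype.card (Fin N)) → ℕ := fun x => (w x : ℕ) with hlam
  have hadj : ∀ x y : Fin (Fintype.card (Fin N)), x ≠ y → (H.Adj (v x) (v y) ↔
      ((x < y ∧ lam y = lam x + 1) ∨ (y < x ∧ lam x = lam y + 1))) := by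
    intro x y hxy
    rcases lt_or_gt_of_ne hxy with h | h
    · rw [hw x y h]
      constructor
      · intro hh; exact Or.inl ⟨h, hh⟩
      · rintro (⟨-, hh⟩ | ⟨hh, -⟩)
        · exact hh
        · exact absurd h (asymm hh)
    · rw [SimpleGraph.adj_comm, hw y x h]
      constructor
      · intro hh; exact Or.inr ⟨h, hh⟩
      · rintro (⟨hh, -⟩ | ⟨-, hh⟩)
        · exact absurd h (asymm hh)
        · exact hh
  -- per-scale bound
  have hscale : ∀ i, i ≤ r - 2 → 2 ^ (r - 2 - i) ≤ ((Finset.image lam Finset.univ).filter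
      (fun j => 2 ^ i ≤ (Finset.univ.filter (fun x => lam x = j)).card)).card := by
    intro i hi
    set A := 2 ^ (r - 1 - i) with hA
    set B := 2 ^ (i + 1) with hBdef
    have hB2 : 2 ≤ B := by
      rw [hBdef]
      calc 2 = 2 ^ 1 := by norm_num
        _ ≤ 2 ^ (i + 1) := Nat.pow_le_pow_right (by norm_num) (by omega)
    have hmle : bN A B 0 0 ≤ 2 ^ r := by
      have : A * B = 2 ^ r := by
        rw [hA, hBdef, ← pow_add]
        congr 1
        omega
      rw [bN]
      omega
    obtain ⟨emb⟩ := huniv (bN A B 0 0) hmle (blockGraph A B 0 0)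
      (isStarForest_blockGraph (A := A) (B := B) (C := 0) (D := 0))
    have hszb : ∀ s : Fin A, (Fin.val s) < A + 0 ∧ ∀ o : Fin B, (o : ℕ) < bsz A B 0 0 (s : ℕ) := by
      intro s
      refine ⟨by omega, fun o => ?_⟩
      rw [bsz, if_pos s.isLt]
      exact o.isLt
    set g : Fin A → Fin B → Fin (Fintype.card (Fin N)) := fun s o =>
      v.symm (emb ⟨bpos A B 0 0 (s : ℕ) (o : ℕ), bpos_lt (hszb s).1 ((hszb s).2 o)⟩) with hg
    have hposne : ∀ (s : Fin A) (o : Fin B) (s' : Fin A) (o' : Fin B), ¬(s = s' ∧ o = o') →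
        (⟨bpos A B 0 0 (s : ℕ) (o : ℕ), bpos_lt (hszb s).1 ((hszb s).2 o)⟩ :
          Fin (bN A B 0 0)) ≠ ⟨bpos A B 0 0 (s' : ℕ) (o' : ℕ), bpos_lt (hszb s').1 ((hszb s').2 o')⟩ := by
      intro s o s' o' hne h
      have := bpos_injOn (hszb s).1 ((hszb s).2 o) (hszb s').1 ((hszb s').2 o')
        (congrArg Fin.val h)
      exact hne ⟨Fin.ext this.1, Fin.ext this.2⟩
    have hginj : ∀ s o s' o', g s o = g s' o' → s = s' ∧ o = o' := by
      intro s o s' o' h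
      by_contra hne
      apply hposne s o s' o' hne
      exact emb.injective (v.symm.injective h)
    have hgadj : ∀ (s : Fin A) (o : Fin B) (s' : Fin A) (o' : Fin B), ¬(s = s' ∧ o = o') →
        (((g s o < g s' o' ∧ lam (g s' o') = lam (g s o) + 1) ∨
          (g s' o' < g s o ∧ lam (g s o) = lam (g s' o') + 1))
          ↔ (s = s' ∧ ((o : ℕ) = 0 ∨ (o' : ℕ) = 0))) := by
      intro s o s' o' hne
      have hgne : g s o ≠ g s' o' := fun h => hne (hginj s o s' o' h)
      rw [← hadj _ _ hgne]
      rw [hg]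
      rw [Equiv.apply_symm_apply, Equiv.apply_symm_apply]
      rw [emb.map_adj_iff]
      have hchar := blockGraph_adj (A := A) (B := B) (C := 0) (D := 0)
        (hszb s).1 ((hszb s).2 o) (hszb s').1 ((hszb s').2 o')
        (fun hp => hne ⟨Fin.ext hp.1, Fin.ext hp.2⟩)
      rw [hchar]
      constructor
      · rintro ⟨h1, h2⟩; exact ⟨Fin.ext h1, h2⟩
      · rintro ⟨h1, h2⟩; exact ⟨congrArg Fin.val h1, h2⟩
    have hcore := core_count hB2 lam g hginj hgadj
    have hBhalf : B / 2 = 2 ^ i := by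
      rw [hBdef, pow_succ]
      omega
    rw [hBhalf] at hcore
    have hA2 : A = 2 * 2 ^ (r - 2 - i) := by
      rw [hA]
      rw [show r - 1 - i = (r - 2 - i) + 1 by omega, pow_succ]
      ring
    omega
  -- summation
  set Q : ℕ → Finset ℕ := fun i => (Finset.image lam Finset.univ).filter
      (fun j => 2 ^ i ≤ (Finset.univ.filter (fun x => lam x = j)).card) with hQ
  have hlow : (r - 1) * 2 ^ (r - 2) ≤
      ∑ i ∈ Finset.range (r - 1), ∑ j ∈ Finset.image lam Finset.univ,
        (if 2 ^ i ≤ (Finset.univ.filter (fun x => lam x = j)).card then 2 ^ i else 0) := by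
    have hterm : ∀ i ∈ Finset.range (r - 1), 2 ^ (r - 2) ≤
        ∑ j ∈ Finset.image lam Finset.univ,
          (if 2 ^ i ≤ (Finset.univ.filter (fun x => lam x = j)).card then 2 ^ i else 0) := by
      intro i hi
      rw [Finset.mem_range] at hi
      rw [← Finset.sum_filter]
      rw [Finset.sum_const, smul_eq_mul]
      have h1 := hscale i (by omega)
      calc 2 ^ (r - 2) = 2 ^ (r - 2 - i) * 2 ^ i := by
            rw [← pow_add]; congr 1; omega
        _ ≤ (Q i).card * 2 ^ i := Nat.mul_le_mul_right _ h1
        _ = _ := by rw [hQ]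
    calc (r - 1) * 2 ^ (r - 2) = (Finset.range (r - 1)).card • 2 ^ (r - 2) := by
          rw [Finset.card_range, smul_eq_mul]
      _ ≤ _ := Finset.card_nsmul_le_sum _ _ _ hterm
  have hup : (∑ i ∈ Finset.range (r - 1), ∑ j ∈ Finset.image lam Finset.univ,
      (if 2 ^ i ≤ (Finset.univ.filter (fun x => lam x = j)).card then 2 ^ i else 0)) ≤ 2 * N := by
    rw [Finset.sum_comm]
    have hperj : ∀ j ∈ Finset.image lam Finset.univ,
        (∑ i ∈ Finset.range (r - 1),
          (if 2 ^ i ≤ (Finset.univ.filter (fun x => lam x = j)).card then 2 ^ i else 0))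
        ≤ 2 * (Finset.univ.filter (fun x => lam x = j)).card := fun j _ =>
      geom_ite_bound _ _
    calc _ ≤ ∑ j ∈ Finset.image lam Finset.univ,
          2 * (Finset.univ.filter (fun x => lam x = j)).card := Finset.sum_le_sum hperj
      _ = 2 * ∑ j ∈ Finset.image lam Finset.univ,
          (Finset.univ.filter (fun x => lam x = j)).card := by rw [Finset.mul_sum]
      _ = 2 * (Finset.univ : Finset (Fin (Fintype.card (Fin N)))).card := by
          rw [← Finset.card_eq_sum_card_fiberwise
            (fun x (_ : x ∈ Finset.univ) => Finset.mem_image_of_mem lam (Finset.mem_univ x))]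
      _ = 2 * N := by simp
  -- contradiction
  have hfinal : (r - 1) * 2 ^ (r - 2) ≤ 2 * (C * 2 ^ r) :=
    le_trans hlow (le_trans hup (by omega))
  have e0 : r - 1 = 8 * C + 1 := by omega
  have e1 : r - 2 = 8 * C := by omega
  have e2 : 2 ^ r = 4 * 2 ^ (8 * C) := by
    rw [hr, pow_add]
    ring
  rw [e0, e1, e2] at hfinal
  have e3 : (8 * C + 1) * 2 ^ (8 * C) = 8 * (C * 2 ^ (8 * C)) + 2 ^ (8 * C) := by ring
  have e4 : 2 * (C * (4 * 2 ^ (8 * C))) = 8 * (C * 2 ^ (8 * C)) := by ring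
  have e5 : 1 ≤ 2 ^ (8 * C) := Nat.one_le_two_pow
  omega

/-! ### Part 2: proper hereditary subclasses are linearly universal -/

lemma isBPG_blockGraph (A B C D : ℕ) : IsBPG (blockGraph A B C D) :=
  isBPG_letterGraph _ _

lemma proper_subclass_linear (Y : GClass) (hher : Hereditary Y)
    (hsub : ∀ n, Y n ⊆ StarForestClass n) (hne : Y ≠ StarForestClass) :
    LinearUniversal Y := by
  classical
  have hex : ∃ (m₀ : ℕ) (Gbad : SimpleGraph (Fin m₀)), IsStarForest Gbad ∧ Gbad ∉ Y m₀ := by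
    have h1 : ∃ n, Y n ≠ StarForestClass n := by
      by_contra h
      push_neg at h
      exact hne (funext h)
    obtain ⟨n, hn⟩ := h1
    have hss : Y n ⊂ StarForestClass n := (hsub n).ssubset_of_ne hn
    obtain ⟨G, hG1, hG2⟩ := Set.exists_of_ssubset hss
    exact ⟨n, G, hG1, hG2⟩
  obtain ⟨m₀, Gbad, hGbadSF, hGbadY⟩ := hex
  rcases Nat.eq_zero_or_pos m₀ with hm0 | hm0
  · -- Y is empty: every graph embeds the empty graph
    subst hm0
    have hempty : ∀ (m : ℕ) (G : SimpleGraph (Fin m)), G ∉ Y m := by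
      intro m G hGm
      exact hGbadY (hher m 0 G Gbad hGm
        ⟨⟨⟨fun x => x.elim0, fun x => x.elim0⟩, fun {a b} => a.elim0⟩⟩)
    refine ⟨1, fun n hn => ⟨0, letterGraph 0 (fun _ => 0), by omega,
      isBPG_letterGraph _ _, fun m _ G hGm => absurd hGm (hempty m G)⟩⟩
  · refine ⟨2 * m₀, fun n hn => ?_⟩
    refine ⟨bN (m₀ - 1) n n m₀, blockGraph (m₀ - 1) n n m₀, ?_, isBPG_blockGraph _ _ _ _, ?_⟩
    · rw [bN]
      have h1 : (m₀ - 1) * n ≤ m₀ * n := Nat.mul_le_mul_right n (by omega)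
      have h2 : n * m₀ = m₀ * n := Nat.mul_comm n m₀
      have h3 : 2 * m₀ * n = 2 * (m₀ * n) := by ring
      omega
    · intro m hm Gm hGmY
      have hSF : IsStarForest Gm := hsub m hGmY
      haveI : Finite Gm.ConnectedComponent :=
        Finite.of_surjective Gm.connectedComponentMk (fun c => c.exists_rep)
      haveI : Finite Gbad.ConnectedComponent :=
        Finite.of_surjective Gbad.connectedComponentMk (fun c => c.exists_rep)
      -- at most m₀ - 1 big components
      have hbig : Nat.card {c : Gm.ConnectedComponent // m₀ + 1 ≤ Nat.card c.supp} ≤ m₀ - 1 := by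
        by_contra hcon
        push_neg at hcon
        have hcard : m₀ ≤ Nat.card {c : Gm.ConnectedComponent // m₀ + 1 ≤ Nat.card c.supp} := by
          omega
        set Big := {c : Gm.ConnectedComponent // m₀ + 1 ≤ Nat.card c.supp} with hBig
        let e := Finite.equivFin Big
        let ι : Fin m₀ → Gm.ConnectedComponent := fun s =>
          (e.symm ⟨(s : ℕ), lt_of_lt_of_le s.isLt hcard⟩ : Big).val
        have hιinj : Function.Injective ι := by
          intro s s' h
          have := e.symm.injective (Subtype.ext h)
          have h2 := congrArg Fin.val this
          exact Fin.ext h2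
        have hιcap : ∀ s, m₀ + 1 ≤ Nat.card (ι s).supp := fun s =>
          (e.symm ⟨(s : ℕ), lt_of_lt_of_le s.isLt hcard⟩ : Big).2
        obtain ⟨embF⟩ := blocks_emb_into Gm hSF m₀ (m₀ + 1) ι hιinj hιcap
        -- Gbad embeds into the same block graph
        let eb := Finite.equivFin Gbad.ConnectedComponent
        have hbc : Nat.card Gbad.ConnectedComponent ≤ m₀ := card_comp_le Gbad
        have hβblt : ∀ c : Gbad.ConnectedComponent, ((eb c : Fin _) : ℕ) < 0 + m₀ :=
          fun c => lt_of_lt_of_le (eb c).isLt (by omega)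
        obtain ⟨embG⟩ := emb_into_blocks Gbad hGbadSF 0 0 m₀ (m₀ + 1)
          (fun c => ((eb c : Fin _) : ℕ))
          (fun c c' h => eb.injective (Fin.ext h)) hβblt
          (fun c => by
            rw [bsz, if_neg (by omega)]
            exact le_trans (card_supp_le Gbad c) (by omega))
        exact hGbadY (hher m m₀ Gm Gbad hGmY ⟨embF.comp embG⟩)
      -- assignment of components to blocks
      set Big := {c : Gm.ConnectedComponent // m₀ + 1 ≤ Nat.card c.supp} with hBigdef
      set Small := {c : Gm.ConnectedComponent // ¬ (m₀ + 1 ≤ Nat.card c.supp)} with hSmalldef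
      let eB := Finite.equivFin Big
      let eS := Finite.equivFin Small
      have hSc : Nat.card Small ≤ n := by
        have h1 : Nat.card Small ≤ Nat.card Gm.ConnectedComponent :=
          Nat.card_le_card_of_injective (Subtype.val : Small → Gm.ConnectedComponent)
            Subtype.val_injective
        have h2 := card_comp_le Gm
        omega
      let β : Gm.ConnectedComponent → ℕ := fun c =>
        if h : m₀ + 1 ≤ Nat.card c.supp then ((eB ⟨c, h⟩ : Fin _) : ℕ)
        else (m₀ - 1) + ((eS ⟨c, h⟩ : Fin _) : ℕ)
      have hβB : ∀ c (h : m₀ + 1 ≤ Nat.card c.supp), β c = ((eB ⟨c, h⟩ : Fin _) : ℕ) :=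
        fun c h => dif_pos h
      have hβS : ∀ c (h : ¬ m₀ + 1 ≤ Nat.card c.supp),
          β c = (m₀ - 1) + ((eS ⟨c, h⟩ : Fin _) : ℕ) := fun c h => dif_neg h
      have hβBlt : ∀ c (h : m₀ + 1 ≤ Nat.card c.supp), β c < m₀ - 1 := fun c h => by
        rw [hβB c h]
        exact lt_of_lt_of_le (eB ⟨c, h⟩).isLt hbig
      have hβSlt : ∀ c (h : ¬ m₀ + 1 ≤ Nat.card c.supp),
          m₀ - 1 ≤ β c ∧ β c < (m₀ - 1) + n := fun c h => by
        rw [hβS c h]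
        have := lt_of_lt_of_le (eS ⟨c, h⟩).isLt hSc
        omega
      have hβinj : Function.Injective β := by
        intro c c' hcc
        by_cases h : m₀ + 1 ≤ Nat.card c.supp <;>
          by_cases h' : m₀ + 1 ≤ Nat.card c'.supp
        · rw [hβB c h, hβB c' h'] at hcc
          have := eB.injective (Fin.ext hcc)
          exact congrArg Subtype.val this
        · exfalso
          have h1 := hβBlt c h
          have h2 := (hβSlt c' h').1
          omega
        · exfalso
          have h1 := hβBlt c' h'
          have h2 := (hβSlt c h).1
          omega
        · rw [hβS c h, hβS c' h'] at hcc
          have h3 : ((eS ⟨c, h⟩ : Fin _) : ℕ) = ((eS ⟨c', h'⟩ : Fin _) : ℕ) := by omega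
          have := eS.injective (Fin.ext h3)
          exact congrArg Subtype.val this
      have hβlt : ∀ c, β c < (m₀ - 1) + n := by
        intro c
        by_cases h : m₀ + 1 ≤ Nat.card c.supp
        · have := hβBlt c h; omega
        · exact (hβSlt c h).2
      have hβcap : ∀ c : Gm.ConnectedComponent,
          Nat.card c.supp ≤ bsz (m₀ - 1) n n m₀ (β c) := by
        intro c
        by_cases h : m₀ + 1 ≤ Nat.card c.supp
        · rw [bsz, if_pos (hβBlt c h)]
          exact le_trans (card_supp_le Gm c) hm
        · rw [bsz, if_neg (by have := (hβSlt c h).1; omega)]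
          omega
      exact emb_into_blocks Gm hSF (m₀ - 1) n n m₀ β hβinj hβlt hβcap


/-- The class of star forests is a minimal hereditary class not admitting a
universal bipartite permutation graph of linear order. -/
theorem star_forests_minimal_no_linear_universal :
    ¬ LinearUniversal StarForestClass ∧
      ∀ Y : GClass, Hereditary Y → (∀ n, Y n ⊆ StarForestClass n) →
        Y ≠ StarForestClass → LinearUniversal Y :=
  ⟨no_linear_universal_starforests, proper_subclass_linear⟩
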